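/- Let ρ(a) = log(exp(a) + exp(−a)), let J ∈ ℝ^{n×1} with J ≥ 0 entrywise, g ∈ ℝ, and define f(x) = ρ(Σ_i J_i x_i + g) for x ∈ {±1}^n. Then for any distinct i, j, the Fourier coefficient f̂_{{i,j}} = 2^{−n} Σ_{x ∈ {±1}^n} f(x)·x_i·x_j is nonnegative, and it is strictly positive whenever J_i > 0 and J_j > 0. -/
import Mathlib

noncomputable def pm (b : Bool) : ℝ := if b then 1 else -1

open Real Finset

lemma pm_true : pm true = 1 := rfl
lemma pm_false : pm false = -1 := rfl

lemma logE {u v : ℝ} (h : u = v) :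
    Real.log (Real.exp u + Real.exp (-u)) = Real.log (Real.exp v + Real.exp (-v)) := by rw [h]

lemma pm_not (b : Bool) : pm (!b) = - pm b := by cases b <;> simp [pm]

lemma expE_pos (u : ℝ) : 0 < Real.exp u + Real.exp (-u) := by positivity

lemma expE_cosh (u : ℝ) : Real.exp u + Real.exp (-u) = 2 * Real.cosh u := by
  rw [Real.cosh_eq]; ring

lemma keyProd (u v : ℝ) :
    (Real.exp (u+v) + Real.exp (-(u+v))) * (Real.exp (u-v) + Real.exp (-(u-v)))
      = (Real.exp (2*u) + Real.exp (-(2*u))) + (Real.exp (2*v) + Real.exp (-(2*v))) := by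
  simp only [two_mul, neg_add_rev, neg_sub, Real.exp_add, Real.exp_sub, Real.exp_neg]
  have a := Real.exp_ne_zero u
  have b := Real.exp_ne_zero v
  field_simp
  ring

lemma abs_key (a b : ℝ) (ha : 0 ≤ a) (hb : 0 ≤ b) : |2*(a-b)| ≤ |2*(a+b)| := by
  have h : |a-b| ≤ a+b := abs_le.2 ⟨by linarith, by linarith⟩
  have h2 : |2*(a+b)| = 2*(a+b) := abs_of_nonneg (by linarith)
  rw [h2, abs_mul]
  have : |(2:ℝ)| = 2 := by norm_num
  rw [this]; linarith

lemma abs_key_lt (a b : ℝ) (ha : 0 < a) (hb : 0 < b) : |2*(a-b)| < |2*(a+b)| := by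
  have h : |a-b| < a+b := abs_lt.2 ⟨by linarith, by linarith⟩
  have h2 : |2*(a+b)| = 2*(a+b) := abs_of_nonneg (by linarith)
  rw [h2, abs_mul]
  have : |(2:ℝ)| = 2 := by norm_num
  rw [this]; linarith

/-- The central analytic inequality. -/
lemma L_nonneg (a b t : ℝ) (ha : 0 ≤ a) (hb : 0 ≤ b) :
    0 ≤ Real.log (Real.exp (t+(a+b)) + Real.exp (-(t+(a+b))))
      + Real.log (Real.exp (t-(a+b)) + Real.exp (-(t-(a+b))))
      - Real.log (Real.exp (t+(a-b)) + Real.exp (-(t+(a-b))))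
      - Real.log (Real.exp (t-(a-b)) + Real.exp (-(t-(a-b)))) := by
  have h1 := (Real.log_mul (expE_pos (t+(a+b))).ne' (expE_pos (t-(a+b))).ne').symm
  have h2 := (Real.log_mul (expE_pos (t+(a-b))).ne' (expE_pos (t-(a-b))).ne').symm
  have hP := keyProd t (a+b)
  have hQ := keyProd t (a-b)
  have hcosh : Real.exp (2*(a-b)) + Real.exp (-(2*(a-b)))
      ≤ Real.exp (2*(a+b)) + Real.exp (-(2*(a+b))) := by
    rw [expE_cosh, expE_cosh]
    exact mul_le_mul_of_nonneg_left (Real.cosh_le_cosh.2 (abs_key a b ha hb)) (by norm_num)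
  have hQP : (Real.exp (t+(a-b)) + Real.exp (-(t+(a-b)))) * (Real.exp (t-(a-b)) + Real.exp (-(t-(a-b))))
      ≤ (Real.exp (t+(a+b)) + Real.exp (-(t+(a+b)))) * (Real.exp (t-(a+b)) + Real.exp (-(t-(a+b)))) := by
    rw [hP, hQ]; linarith
  have hlog := Real.log_le_log (by positivity) hQP
  linarith [h1, h2, hlog]

lemma L_pos (a b t : ℝ) (ha : 0 < a) (hb : 0 < b) :
    0 < Real.log (Real.exp (t+(a+b)) + Real.exp (-(t+(a+b))))
      + Real.log (Real.exp (t-(a+b)) + Real.exp (-(t-(a+b))))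
      - Real.log (Real.exp (t+(a-b)) + Real.exp (-(t+(a-b))))
      - Real.log (Real.exp (t-(a-b)) + Real.exp (-(t-(a-b)))) := by
  have h1 := (Real.log_mul (expE_pos (t+(a+b))).ne' (expE_pos (t-(a+b))).ne').symm
  have h2 := (Real.log_mul (expE_pos (t+(a-b))).ne' (expE_pos (t-(a-b))).ne').symm
  have hP := keyProd t (a+b)
  have hQ := keyProd t (a-b)
  have hcosh : Real.exp (2*(a-b)) + Real.exp (-(2*(a-b)))
      < Real.exp (2*(a+b)) + Real.exp (-(2*(a+b))) := by
    rw [expE_cosh, expE_cosh]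
    have := Real.cosh_lt_cosh.2 (abs_key_lt a b ha hb)
    linarith
  have hQP : (Real.exp (t+(a-b)) + Real.exp (-(t+(a-b)))) * (Real.exp (t-(a-b)) + Real.exp (-(t-(a-b))))
      < (Real.exp (t+(a+b)) + Real.exp (-(t+(a+b)))) * (Real.exp (t-(a+b)) + Real.exp (-(t-(a+b)))) := by
    rw [hP, hQ]; linarith
  have hlog := Real.log_lt_log (by positivity) hQP
  linarith [h1, h2, hlog]

def flipB {n : ℕ} (i : Fin n) (x : Fin n → Bool) : Fin n → Bool :=
  Function.update x i (!(x i))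

lemma flipB_invol {n : ℕ} (i : Fin n) : Function.Involutive (flipB i) := by
  intro x; funext k
  rcases eq_or_ne k i with rfl | h
  · simp [flipB]
  · simp [flipB, Function.update_of_ne h]

lemma flipB_apply_self {n : ℕ} (i : Fin n) (x : Fin n → Bool) : flipB i x i = !(x i) :=
  Function.update_self _ _ _

lemma flipB_apply_ne {n : ℕ} (i k : Fin n) (h : k ≠ i) (x : Fin n → Bool) :
    flipB i x k = x k := Function.update_of_ne h _ _

lemma sum_flip {n : ℕ} (J : Fin n → ℝ) (i : Fin n) (x : Fin n → Bool) :
    ∑ k, J k * pm (flipB i x k) = (∑ k, J k * pm (x k)) - 2 * (J i * pm (x i)) := by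
  have h1 : ∀ k ∈ Finset.univ.erase i, J k * pm (flipB i x k) = J k * pm (x k) := by
    intro k hk
    rw [flipB_apply_ne i k (Finset.mem_erase.1 hk).1]
  rw [← Finset.sum_erase_add _ _ (Finset.mem_univ i),
    ← Finset.sum_erase_add _ (fun k => J k * pm (x k)) (Finset.mem_univ i),
    Finset.sum_congr rfl h1, flipB_apply_self, pm_not]
  ring

theorem stmt12 (n : ℕ) (J : Fin n → ℝ) (hJ : ∀ i, 0 ≤ J i) (g : ℝ)
    (i j : Fin n) (hij : i ≠ j) :
    let ρ : ℝ → ℝ := fun a => Real.log (Real.exp a + Real.exp (-a))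
    let c : ℝ := ((2 : ℝ) ^ n)⁻¹ *
      ∑ x : Fin n → Bool, ρ ((∑ i', J i' * pm (x i')) + g) * pm (x i) * pm (x j)
    0 ≤ c ∧ (0 < J i → 0 < J j → 0 < c) := by
  intro ρ c
  set F : (Fin n → Bool) → ℝ := fun x =>
    Real.log (Real.exp ((∑ i', J i' * pm (x i')) + g)
      + Real.exp (-((∑ i', J i' * pm (x i')) + g))) * pm (x i) * pm (x j) with hF
  have hc : c = ((2:ℝ)^n)⁻¹ * ∑ x : Fin n → Bool, F x := rfl
  set T : (Fin n → Bool) → ℝ := fun x =>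
    (∑ k, J k * pm (x k)) + g - J i * pm (x i) - J j * pm (x j) with hT
  set L : ℝ → ℝ := fun t =>
    Real.log (Real.exp (t+(J i+J j)) + Real.exp (-(t+(J i+J j))))
      + Real.log (Real.exp (t-(J i+J j)) + Real.exp (-(t-(J i+J j))))
      - Real.log (Real.exp (t+(J i-J j)) + Real.exp (-(t+(J i-J j))))
      - Real.log (Real.exp (t-(J i-J j)) + Real.exp (-(t-(J i-J j)))) with hL
  have hji : j ≠ i := hij.symm
  have hG : ∀ x, F x + F (flipB i x) + F (flipB j x) + F (flipB i (flipB j x)) = L (T x) := by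
    intro x
    have s1 := sum_flip J i x
    have s2 := sum_flip J j x
    have s3 : ∑ k, J k * pm (flipB i (flipB j x) k)
        = (∑ k, J k * pm (x k)) - 2 * (J j * pm (x j)) - 2 * (J i * pm (x i)) := by
      rw [sum_flip J i (flipB j x), sum_flip J j x, flipB_apply_ne j i hij]
    simp only [hF, hL, hT, s1, s2, s3, flipB_apply_self, flipB_apply_ne j i hij,
      flipB_apply_ne i j hji, pm_not]
    cases hxi : x i <;> cases hxj : x j <;>
      simp only [hxi, hxj, pm_true, pm_false, mul_one, mul_neg_one, neg_neg, neg_mul,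
        one_mul, neg_one_mul]
    case false.false =>
      have e1 := logE (show (∑ i' : Fin n, J i' * pm (x i')) + g - -J i - -J j + (J i + J j) = (∑ i' : Fin n, J i' * pm (x i')) - 2 * -J j - 2 * -J i + g from by ring)
      have e2 := logE (show (∑ i' : Fin n, J i' * pm (x i')) + g - -J i - -J j - (J i + J j) = (∑ i' : Fin n, J i' * pm (x i')) + g from by ring)
      have e3 := logE (show (∑ i' : Fin n, J i' * pm (x i')) + g - -J i - -J j + (J i - J j) = (∑ i' : Fin n, J i' * pm (x i')) - 2 * -J i + g from by ring)
      have e4 := logE (show (∑ i' : Fin n, J i' * pm (x i')) + g - -J i - -J j - (J i - J j) = (∑ i' : Fin n, J i' * pm (x i')) - 2 * -J j + g from by ring)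
      linarith [e1, e2, e3, e4]
    case false.true =>
      have e1 := logE (show (∑ i' : Fin n, J i' * pm (x i')) + g - -J i - J j + (J i + J j) = (∑ i' : Fin n, J i' * pm (x i')) - 2 * -J i + g from by ring)
      have e2 := logE (show (∑ i' : Fin n, J i' * pm (x i')) + g - -J i - J j - (J i + J j) = (∑ i' : Fin n, J i' * pm (x i')) - 2 * J j + g from by ring)
      have e3 := logE (show (∑ i' : Fin n, J i' * pm (x i')) + g - -J i - J j + (J i - J j) = (∑ i' : Fin n, J i' * pm (x i')) - 2 * J j - 2 * -J i + g from by ring)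
      have e4 := logE (show (∑ i' : Fin n, J i' * pm (x i')) + g - -J i - J j - (J i - J j) = (∑ i' : Fin n, J i' * pm (x i')) + g from by ring)
      linarith [e1, e2, e3, e4]
    case true.false =>
      have e1 := logE (show (∑ i' : Fin n, J i' * pm (x i')) + g - J i - -J j + (J i + J j) = (∑ i' : Fin n, J i' * pm (x i')) - 2 * -J j + g from by ring)
      have e2 := logE (show (∑ i' : Fin n, J i' * pm (x i')) + g - J i - -J j - (J i + J j) = (∑ i' : Fin n, J i' * pm (x i')) - 2 * J i + g from by ring)
      have e3 := logE (show (∑ i' : Fin n, J i' * pm (x i')) + g - J i - -J j + (J i - J j) = (∑ i' : Fin n, J i' * pm (x i')) + g from by ring)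
      have e4 := logE (show (∑ i' : Fin n, J i' * pm (x i')) + g - J i - -J j - (J i - J j) = (∑ i' : Fin n, J i' * pm (x i')) - 2 * -J j - 2 * J i + g from by ring)
      linarith [e1, e2, e3, e4]
    case true.true =>
      have e1 := logE (show (∑ i' : Fin n, J i' * pm (x i')) + g - J i - J j + (J i + J j) = (∑ i' : Fin n, J i' * pm (x i')) + g from by ring)
      have e2 := logE (show (∑ i' : Fin n, J i' * pm (x i')) + g - J i - J j - (J i + J j) = (∑ i' : Fin n, J i' * pm (x i')) - 2 * J j - 2 * J i + g from by ring)
      have e3 := logE (show (∑ i' : Fin n, J i' * pm (x i')) + g - J i - J j + (J i - J j) = (∑ i' : Fin n, J i' * pm (x i')) - 2 * J j + g from by ring)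
      have e4 := logE (show (∑ i' : Fin n, J i' * pm (x i')) + g - J i - J j - (J i - J j) = (∑ i' : Fin n, J i' * pm (x i')) - 2 * J i + g from by ring)
      linarith [e1, e2, e3, e4]
  have e1 : ∑ x : Fin n → Bool, F (flipB i x) = ∑ x : Fin n → Bool, F x :=
    Fintype.sum_bijective (flipB i) (flipB_invol i).bijective _ _ (fun x => rfl)
  have e2 : ∑ x : Fin n → Bool, F (flipB j x) = ∑ x : Fin n → Bool, F x :=
    Fintype.sum_bijective (flipB j) (flipB_invol j).bijective _ _ (fun x => rfl)
  have e3 : ∑ x : Fin n → Bool, F (flipB i (flipB j x)) = ∑ x : Fin n → Bool, F x :=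
    Fintype.sum_bijective (fun x => flipB i (flipB j x))
      ((flipB_invol i).bijective.comp (flipB_invol j).bijective) _ _ (fun x => rfl)
  have sumEq : (4:ℝ) * (∑ x : Fin n → Bool, F x) = ∑ x : Fin n → Bool, L (T x) := by
    have : ∑ x : Fin n → Bool, L (T x)
        = ∑ x : Fin n → Bool, (F x + F (flipB i x) + F (flipB j x) + F (flipB i (flipB j x))) :=
      Finset.sum_congr rfl (fun x _ => (hG x).symm)
    rw [this, Finset.sum_add_distrib, Finset.sum_add_distrib, Finset.sum_add_distrib,
      e1, e2, e3]
    ring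
  have hpow : (0:ℝ) < ((2:ℝ)^n)⁻¹ := by positivity
  constructor
  · have hs : 0 ≤ ∑ x : Fin n → Bool, L (T x) :=
      Finset.sum_nonneg (fun x _ => L_nonneg (J i) (J j) (T x) (hJ i) (hJ j))
    rw [hc]
    have : 0 ≤ ∑ x : Fin n → Bool, F x := by linarith
    positivity
  · intro ha hb
    have hs : 0 < ∑ x : Fin n → Bool, L (T x) :=
      Finset.sum_pos (fun x _ => L_pos (J i) (J j) (T x) ha hb) Finset.univ_nonempty
    rw [hc]
    have : 0 < ∑ x : Fin n → Bool, F x := by linarith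
    exact mul_pos hpow this
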